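/- Let A and B be finite subsets of ℝ^d, each of cardinality at least 3, such that ‖a − b‖ = 1 for all a ∈ A, b ∈ B. Then the affine span of A and the affine span of B are orthogonal: for all a, a' ∈ A and b, b' ∈ B, the vectors a − a' and b − b' are orthogonal. -/

import Mathlib

/-- Lenz lemma (orthogonality part): the affine spans of two finite sets of size at
least 3 at mutual unit distance are orthogonal. -/
theorem stmt_4 {d : ℕ} (A B : Finset (EuclideanSpace ℝ (Fin d)))
    (hA : 3 ≤ A.card) (hB : 3 ≤ B.card)
    (h : ∀ a ∈ A, ∀ b ∈ B, dist a b = 1) :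
    ∀ a ∈ A, ∀ a' ∈ A, ∀ b ∈ B, ∀ b' ∈ B,
      inner ℝ (a - a') (b - b') = (0 : ℝ) := by
  have key : ∀ x y : EuclideanSpace ℝ (Fin d), dist x y = 1 →
      (inner ℝ x y : ℝ) = (‖x‖ ^ 2 + ‖y‖ ^ 2 - 1) / 2 := by
    intro x y hxy
    rw [dist_eq_norm] at hxy
    have h2 : ‖x - y‖ ^ 2 = 1 := by rw [hxy]; ring
    rw [norm_sub_sq_real] at h2
    linarith
  intro a ha a' ha' b hb b' hb'
  have h1 := key a b (h a ha b hb)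
  have h2 := key a b' (h a ha b' hb')
  have h3 := key a' b (h a' ha' b hb)
  have h4 := key a' b' (h a' ha' b' hb')
  simp only [inner_sub_left, inner_sub_right]
  linarith [real_inner_comm a b, real_inner_comm a b', real_inner_comm a' b,
    real_inner_comm a' b']
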